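/- In the Witt ring of a field k of characteristic ≠ 2, let q₁, q₂, q₃, q₄ be the norm forms of four quaternion algebras (2-fold Pfister forms) and c ∈ k×. Suppose ⟨⟨c⟩⟩·(q₁ − q₂) = ⟨m⟩·⟨⟨c⟩⟩·(q₃ − q₄) for some m ∈ k×. Then ⟨⟨c⟩⟩·(q₁ − q₂)² = ⟨⟨c⟩⟩·(q₃ − q₄)², ⟨⟨c⟩⟩·q₁·q₂·(q₃ − q₄) = 0, and ⟨⟨c⟩⟩·q₁·(q₃ − q₄)² = 4·⟨⟨c⟩⟩·q₁·(q₁ − q₂) in W(k). -/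
import Mathlib


/-- in the Witt ring `W(k)` of a field of characteristic ≠ 2
(axiomatized as a commutative ring `W`), let `c` denote the class of
`⟨⟨c⟩⟩ = ⟨1,−c⟩`, let `q₁, …, q₄` be classes of 2-fold Pfister forms (norm
forms of quaternion algebras, so `qᵢ² = 4·qᵢ`), and let `m` be the class of a
one-dimensional form `⟨m⟩` (so `m² = 1`).  If
`⟨⟨c⟩⟩(q₁ − q₂) = ⟨m⟩⟨⟨c⟩⟩(q₃ − q₄)`, then
`⟨⟨c⟩⟩(q₁ − q₂)² = ⟨⟨c⟩⟩(q₃ − q₄)²`, `⟨⟨c⟩⟩q₁q₂(q₃ − q₄) = 0`, and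
`⟨⟨c⟩⟩q₁(q₃ − q₄)² = 4·⟨⟨c⟩⟩q₁(q₁ − q₂)`. -/
theorem stmt_7 {W : Type*} [CommRing W]
    (c q₁ q₂ q₃ q₄ m : W)
    (hm : m * m = 1)
    (h₁ : q₁ * q₁ = 4 * q₁) (h₂ : q₂ * q₂ = 4 * q₂)
    (h₃ : q₃ * q₃ = 4 * q₃) (h₄ : q₄ * q₄ = 4 * q₄)
    (h : c * (q₁ - q₂) = m * (c * (q₃ - q₄))) :
    c * (q₁ - q₂) ^ 2 = c * (q₃ - q₄) ^ 2 ∧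
    c * q₁ * q₂ * (q₃ - q₄) = 0 ∧
    c * q₁ * (q₃ - q₄) ^ 2 = 4 * (c * q₁ * (q₁ - q₂)) := by
  have g1 : c * (q₁ - q₂) ^ 2 = c * (q₃ - q₄) ^ 2 := by
    linear_combination ((q₁ - q₂) + m * (q₃ - q₄)) * h + c * (q₃ - q₄) ^ 2 * hm
  have g2 : c * q₁ * q₂ * (q₃ - q₄) = 0 := by
    linear_combination (-m * q₁ * q₂) * h + m * c * q₂ * h₁ - m * c * q₁ * h₂ -
      c * q₁ * q₂ * (q₃ - q₄) * hm
  refine ⟨g1, g2, ?_⟩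
  linear_combination (-q₁) * g1 + c * (q₁ - 2 * q₂) * h₁ + c * q₁ * h₂
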